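/- arXiv:2511.12736 — 2 statements merged into one kernel-verified Lean document; each statement's English description precedes it below -/
import Mathlib

section
/- Let T be a nonspecial, well-pruned ω₁-tree. Then ◊_T⁻ holds if and only if ◊_T holds. -/
open Set

/-- The first uncountable ordinal `ω₁`. -/
noncomputable def omega1 : Ordinal := Ordinal.omega 1

section TreeDefs

variable {T : Type*} [PartialOrder T]

/-- In a tree, the set of strict predecessors of any node is linearly ordered. -/
def PredsChain (T : Type*) [PartialOrder T] : Prop :=
  ∀ t : T, IsChain (· ≤ ·) {s : T | s < t}

/-- `ht` is *the* height function of the tree: it is strictly monotone on comparable pairs and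
the heights of the strict predecessors of `t` are exactly the ordinals below `ht t`; together
with `PredsChain` this says that the set `t↓` of strict predecessors of `t` is well-ordered
with order type `ht t`. -/
def IsHeightFun (ht : T → Ordinal) : Prop :=
  (∀ s t : T, s < t → ht s < ht t) ∧
  ∀ t : T, ∀ o : Ordinal, o < ht t → ∃ s : T, s < t ∧ ht s = o

/-- The tree has height `ω₁`: every node has height `< ω₁` and every countable ordinal is the
height of some node. -/
def HeightOmega1 (ht : T → Ordinal) : Prop :=
  (∀ t : T, ht t < omega1) ∧ ∀ o : Ordinal, o < omega1 → ∃ t : T, ht t = o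

/-- All levels of the tree are countable. -/
def CountableLevels (ht : T → Ordinal) : Prop :=
  ∀ o : Ordinal, {t : T | ht t = o}.Countable

/-- A tree of height `ω₁` is well-pruned if every node has successors in all later levels. -/
def WellPruned (ht : T → Ordinal) : Prop :=
  ∀ o o' : Ordinal, o < o' → o' < omega1 →
    ∀ s : T, ht s = o → ∃ t : T, s < t ∧ ht t = o'

/-- A special subset of a tree: a union of countably many antichains. -/
def IsSpecialSet (U : Set T) : Prop :=
  ∃ A : ℕ → Set T, (∀ n : ℕ, IsAntichain (· ≤ ·) (A n)) ∧ U ⊆ ⋃ n, A n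

/-- Membership in the ideal `NS^T`: there is a regressive map on `B` all of whose fibers
are special. -/
def InNS [OrderBot T] (B : Set T) : Prop :=
  ∃ f : T → T, (∀ t ∈ B, t ≠ ⊥ → f t < t) ∧
    ∀ t : T, IsSpecialSet {s : T | s ∈ B ∧ f s = t}

/-- The diamond principle `◊_T` for a tree `T`. -/
def DiamondTree (T : Type*) [PartialOrder T] [OrderBot T] : Prop :=
  ∃ D : T → Set T, (∀ t : T, D t ⊆ Set.Iio t) ∧
    ∀ X : Set T, ¬ InNS {t : T | X ∩ Set.Iio t = D t}

end TreeDefs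

/-- Club subsets of `ω₁`: closed and unbounded in `ω₁`. -/
def IsClubIn (C : Set Ordinal) : Prop :=
  C ⊆ Set.Iio omega1 ∧
  (∀ o : Ordinal, o < omega1 → ∃ b ∈ C, o < b) ∧
  ∀ o : Ordinal, o < omega1 → (C ∩ Set.Iio o).Nonempty →
    IsLUB (C ∩ Set.Iio o) o → o ∈ C

/-- Stationary subsets of `ω₁`: sets meeting every club. -/
def IsStationaryIn (S : Set Ordinal) : Prop :=
  ∀ C : Set Ordinal, IsClubIn C → (S ∩ C).Nonempty

/-- The diamond principle `◊(S)` for `S ⊆ ω₁`;  `◊` is `DiamondOn (Set.Iio omega1)`. -/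
def DiamondOn (S : Set Ordinal) : Prop :=
  ∃ D : Ordinal → Set Ordinal, (∀ o ∈ S, D o ⊆ Set.Iio o) ∧
    ∀ X : Set Ordinal, X ⊆ Set.Iio omega1 →
      IsStationaryIn {o ∈ S | X ∩ Set.Iio o = D o}

/-- The diamond principle `◊_T⁻`: each node guesses from a countable family of subsets
of `t↓`, and every `X ⊆ T` is guessed on a set not in `NS^T`. -/
def DiamondTreeMinus (T : Type*) [PartialOrder T] [OrderBot T] : Prop :=
  ∃ D : T → Set (Set T),
    (∀ t : T, (∀ A ∈ D t, A ⊆ Set.Iio t) ∧ (D t).Countable) ∧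
    ∀ X : Set T, ¬ InNS {t : T | X ∩ Set.Iio t ∈ D t}

section AuxSpecial

variable {T : Type*} [PartialOrder T]

lemma isSpecialSet_mono {U V : Set T} (h : U ⊆ V) (hV : IsSpecialSet V) : IsSpecialSet U := by
  obtain ⟨A, hA, hV'⟩ := hV
  exact ⟨A, hA, h.trans hV'⟩

lemma isSpecialSet_countable {U : Set T} (h : U.Countable) : IsSpecialSet U := by
  rcases U.eq_empty_or_nonempty with rfl | hne
  · refine ⟨fun _ => ∅, fun n => ?_, by simp⟩
    exact Set.subsingleton_empty.isAntichain _
  · obtain ⟨f, hf⟩ := h.exists_eq_range hne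
    refine ⟨fun n => {f n}, fun n => Set.subsingleton_singleton.isAntichain _, ?_⟩
    rw [hf]
    rintro x ⟨n, rfl⟩
    exact Set.mem_iUnion.2 ⟨n, rfl⟩

lemma isSpecialSet_iUnion {U : ℕ → Set T} (h : ∀ n, IsSpecialSet (U n)) :
    IsSpecialSet (⋃ n, U n) := by
  choose A hA hU using h
  refine ⟨fun k => A (Nat.unpair k).1 (Nat.unpair k).2, fun k => hA _ _, ?_⟩
  intro x hx
  obtain ⟨n, hn⟩ := Set.mem_iUnion.1 hx
  obtain ⟨m, hm⟩ := Set.mem_iUnion.1 (hU n hn)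
  exact Set.mem_iUnion.2 ⟨Nat.pair n m, by simpa [Nat.unpair_pair] using hm⟩

variable [OrderBot T]

lemma inNS_mono {B B' : Set T} (h : B' ⊆ B) (hB : InNS B) : InNS B' := by
  obtain ⟨f, hreg, hfib⟩ := hB
  refine ⟨f, fun t htB => hreg t (h htB), fun t => isSpecialSet_mono ?_ (hfib t)⟩
  rintro s ⟨h1, h2⟩
  exact ⟨h h1, h2⟩

lemma inNS_iUnion {B : ℕ → Set T} (h : ∀ n, InNS (B n)) : InNS (⋃ n, B n) := by
  classical
  choose f hreg hfib using h
  refine ⟨fun t => if h : ∃ n, t ∈ B n then f (Nat.find h) t else t, ?_, ?_⟩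
  · intro t htm hne
    have hex : ∃ n, t ∈ B n := Set.mem_iUnion.1 htm
    simp only [dif_pos hex]
    exact hreg _ t (Nat.find_spec hex) hne
  · intro u
    refine isSpecialSet_mono (V := ⋃ n, {s | s ∈ B n ∧ f n s = u}) ?_
      (isSpecialSet_iUnion fun n => hfib n u)
    rintro s ⟨hsm, hfs⟩
    have hex : ∃ n, s ∈ B n := Set.mem_iUnion.1 hsm
    simp only [dif_pos hex] at hfs
    exact Set.mem_iUnion.2 ⟨Nat.find hex, Nat.find_spec hex, hfs⟩

lemma inNS_union {A B : Set T} (hA : InNS A) (hB : InNS B) : InNS (A ∪ B) := by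
  classical
  have : A ∪ B = ⋃ n : ℕ, (if n = 0 then A else B) := by
    ext x
    simp only [Set.mem_union, Set.mem_iUnion]
    constructor
    · rintro (h | h)
      · exact ⟨0, by simp [h]⟩
      · exact ⟨1, by simp [h]⟩
    · rintro ⟨n, hn⟩
      by_cases h0 : n = 0
      · rw [h0] at hn; simp only [if_pos rfl] at hn; exact Or.inl hn
      · rw [if_neg h0] at hn; exact Or.inr hn
  rw [this]
  exact inNS_iUnion fun n => by by_cases h0 : n = 0 <;> simp [h0, hA, hB]

end AuxSpecial

/-- Decoding the `j`-th coordinate of a coded subset `W` of the predecessors of `t`. -/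
def decodeSet {T : Type*} [PartialOrder T] (ht : T → Ordinal) (j : ℕ) (W : Set T) (t : T) :
    Set T :=
  {x | x < t ∧ ∃ s, s < t ∧ s ∈ W ∧ x ≤ s ∧ ht s = Ordinal.omega0 * ht x + j}

/-- If `T` is a nonspecial, well-pruned `ω₁`-tree then `◊_T⁻` holds
if and only if `◊_T` holds. -/
theorem stmt5 {T : Type*} [PartialOrder T] [OrderBot T]
    (hchain : PredsChain T) (ht : T → Ordinal)
    (hht : IsHeightFun ht) (hΩ : HeightOmega1 ht) (hlev : CountableLevels ht)
    (hns : ¬ IsSpecialSet (Set.univ : Set T))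
    (hwp : WellPruned ht) :
    DiamondTreeMinus T ↔ DiamondTree T := by
  classical
  obtain ⟨hmono, hex⟩ := hht
  -- basic facts about heights
  have hbot : ht ⊥ = 0 := by
    by_contra h
    obtain ⟨s, hs, -⟩ := hex ⊥ 0 (pos_iff_ne_zero.2 h)
    exact absurd hs (not_lt_bot)
  have hpos : ∀ t : T, t ≠ ⊥ → 0 < ht t := by
    intro t h
    have := hmono ⊥ t (Ne.bot_lt h)
    rwa [hbot] at this
  -- uniqueness of nodes of a given height below a fixed node
  have huniq : ∀ t x y : T, x ≤ t → y ≤ t → ht x = ht y → x = y := by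
    intro t x y hx hy hxy
    have hcomp : x ≤ y ∨ y ≤ x := by
      rcases eq_or_lt_of_le hx with rfl | hx'
      · exact Or.inr hy
      rcases eq_or_lt_of_le hy with rfl | hy'
      · exact Or.inl hx'.le
      rcases eq_or_ne x y with rfl | hne
      · exact Or.inl le_rfl
      · exact hchain t hx' hy' hne
    rcases hcomp with h | h
    · rcases eq_or_lt_of_le h with rfl | h'
      · rfl
      · exact absurd hxy (hmono x y h').ne
    · rcases eq_or_lt_of_le h with rfl | h'
      · rfl
      · exact absurd hxy.symm (hmono y x h').ne
  -- uniqueness of the `ω·β + j` decomposition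
  have hdiv : ∀ (β γ : Ordinal) (j k : ℕ),
      Ordinal.omega0 * β + (j : Ordinal) = Ordinal.omega0 * γ + (k : Ordinal) →
      β = γ ∧ j = k := by
    intro β γ j k h
    have h1 : β = γ := by
      have := congrArg (· / Ordinal.omega0) h
      simpa [Ordinal.mul_add_div _ Ordinal.omega0_ne_zero,
        Ordinal.div_eq_zero_of_lt (Ordinal.nat_lt_omega0 _)] using this
    have h2 : j = k := by
      have h2' := congrArg (· % Ordinal.omega0) h
      simp only [Ordinal.mul_add_mod_self,
        Ordinal.mod_eq_of_lt (Ordinal.nat_lt_omega0 _)] at h2'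
      exact_mod_cast h2'
    exact ⟨h1, h2⟩
  have hself : ∀ δ : Ordinal, δ < Ordinal.omega0 * δ + Ordinal.omega0 := by
    intro δ
    calc δ ≤ Ordinal.omega0 * δ := Ordinal.le_mul_right δ Ordinal.omega0_pos
    _ < Ordinal.omega0 * δ + Ordinal.omega0 := by
        have := add_lt_add_right Ordinal.omega0_pos (Ordinal.omega0 * δ)
        simpa using this
  -- cardinality facts
  have hcard : ∀ b : Ordinal, b < omega1 → b.card ≤ Cardinal.aleph0 := by
    intro b hb
    have ho1 : omega1 = (Cardinal.aleph 1).ord := (Cardinal.ord_aleph 1).symm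
    rw [ho1, Cardinal.lt_ord, ← Cardinal.succ_aleph0, Order.lt_succ_iff] at hb
    exact hb
  have homega1 : ∀ b : Ordinal, b < omega1 →
      Ordinal.omega0 * b + Ordinal.omega0 < omega1 := by
    intro b hb
    have ho1 : omega1 = (Cardinal.aleph 1).ord := (Cardinal.ord_aleph 1).symm
    rw [ho1, Cardinal.lt_ord, Ordinal.card_add, Ordinal.card_mul, Ordinal.card_omega0]
    have h1 : Cardinal.aleph0 * b.card + Cardinal.aleph0 ≤ Cardinal.aleph0 := by
      calc Cardinal.aleph0 * b.card + Cardinal.aleph0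
          ≤ Cardinal.aleph0 * Cardinal.aleph0 + Cardinal.aleph0 := by
            exact add_le_add_left (mul_le_mul_right (hcard b hb) _) _
        _ = Cardinal.aleph0 := by
            rw [Cardinal.aleph0_mul_aleph0, Cardinal.aleph0_add_aleph0]
    exact lt_of_le_of_lt h1 Cardinal.aleph0_lt_aleph_one
  -- countability of initial parts of the tree
  have hIio : ∀ b : Ordinal, b < omega1 → (Set.Iio b).Countable := by
    intro b hb
    rw [Cardinal.countable_iff_lt_aleph_one, Ordinal.mk_Iio_ordinal]
    calc Cardinal.lift b.card ≤ Cardinal.lift Cardinal.aleph0 :=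
          Cardinal.lift_le.2 (hcard b hb)
      _ = Cardinal.aleph0 := Cardinal.lift_aleph0
      _ < Cardinal.aleph 1 := Cardinal.aleph0_lt_aleph_one
  have hlow : ∀ b : Ordinal, b < omega1 → ({s : T | ht s < b}).Countable := by
    intro b hb
    have heq : {s : T | ht s < b} = ⋃ o ∈ Set.Iio b, {s : T | ht s = o} := by
      ext s
      simp only [Set.mem_setOf_eq, Set.mem_iUnion, Set.mem_Iio, exists_prop]
      exact ⟨fun h => ⟨ht s, h, rfl⟩, fun ⟨o, ho, h⟩ => h ▸ ho⟩
    rw [heq]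
    exact (hIio b hb).biUnion fun o _ => hlev o
  -- the set of nodes of "bad" height is in NS
  have hbadNS : InNS {t : T |
      ¬ (0 < ht t ∧ ∀ β < ht t, Ordinal.omega0 * β + Ordinal.omega0 ≤ ht t)} := by
    have hkey : ∀ t : T,
        (¬ (0 < ht t ∧ ∀ β < ht t, Ordinal.omega0 * β + Ordinal.omega0 ≤ ht t)) → t ≠ ⊥ →
        ∃ s, s < t ∧ ht s = sInf {β | ht t < Ordinal.omega0 * β + Ordinal.omega0} := by
      intro t htB hne
      have hδ : 0 < ht t := hpos t hne
      have hbad' : ∃ β, β < ht t ∧ ht t < Ordinal.omega0 * β + Ordinal.omega0 := by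
        by_contra hc
        push_neg at hc
        exact htB ⟨hδ, hc⟩
      obtain ⟨β, hβ, hβ2⟩ := hbad'
      have hinf : sInf {β | ht t < Ordinal.omega0 * β + Ordinal.omega0} < ht t :=
        lt_of_le_of_lt (csInf_le' hβ2) hβ
      exact hex t _ hinf
    refine ⟨fun t => if h : ∃ s, s < t ∧
        ht s = sInf {β | ht t < Ordinal.omega0 * β + Ordinal.omega0} then h.choose else ⊥,
        ?_, ?_⟩
    · intro t htB hne
      have h := hkey t htB hne
      simp only [dif_pos h]
      exact h.choose_spec.1
    · intro u
      apply isSpecialSet_countable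
      refine Set.Countable.mono ?_
        ((hlow _ (homega1 (ht u) (hΩ.1 u))).insert ⊥)
      rintro s ⟨hsB, hfs⟩
      rcases eq_or_ne s ⊥ with rfl | hne
      · exact Set.mem_insert _ _
      · have h := hkey s hsB hne
        simp only [dif_pos h] at hfs
        have hu : ht u = sInf {β | ht s < Ordinal.omega0 * β + Ordinal.omega0} := by
          rw [← hfs]
          exact h.choose_spec.2
        have hmem : sInf {β | ht s < Ordinal.omega0 * β + Ordinal.omega0} ∈
            {β | ht s < Ordinal.omega0 * β + Ordinal.omega0} :=
          csInf_mem ⟨ht s, hself (ht s)⟩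
        refine Set.mem_insert_of_mem _ ?_
        show ht s < Ordinal.omega0 * ht u + Ordinal.omega0
        rw [hu]
        exact hmem
  constructor
  · -- ◊⁻ → ◊
    rintro ⟨𝒟, hD, hguess⟩
    by_contra hnd
    -- enumerate the countable families
    have henum : ∀ t : T, ∃ e : ℕ → Set T, ∀ A ∈ 𝒟 t, ∃ m, e m = A := by
      intro t
      rcases (𝒟 t).eq_empty_or_nonempty with h | h
      · exact ⟨fun _ => ∅, fun A hA => by rw [h] at hA; exact absurd hA (Set.notMem_empty A)⟩
      · obtain ⟨f, hf⟩ := (hD t).2.exists_eq_range h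
        exact ⟨f, fun A hA => by rw [hf] at hA; exact hA⟩
    choose e he using henum
    -- counterexamples to each candidate diamond sequence
    have hfail : ∀ j : ℕ, ∃ X : Set T,
        InNS {t : T | X ∩ Set.Iio t = decodeSet ht j (e t (Nat.unpair j).2) t} := by
      intro j
      by_contra hc
      push_neg at hc
      exact hnd ⟨fun t => decodeSet ht j (e t (Nat.unpair j).2) t,
        fun t x hx => hx.1, hc⟩
    choose X hX using hfail
    -- the coded set
    set Y : Set T := {s : T | ∃ (x : T) (j : ℕ),
      x ≤ s ∧ ht s = Ordinal.omega0 * ht x + (j : Ordinal) ∧ x ∈ X j} with hY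
    refine hguess Y ?_
    refine inNS_mono ?_ (inNS_union hbadNS (inNS_iUnion fun j => hX j))
    -- the main inclusion
    intro t htm
    by_cases hg : 0 < ht t ∧ ∀ β < ht t, Ordinal.omega0 * β + Ordinal.omega0 ≤ ht t
    · -- good heights: the guess decodes correctly
      obtain ⟨m, hm⟩ := he t _ htm
      have hdec : ∀ j : ℕ, X j ∩ Set.Iio t = decodeSet ht j (Y ∩ Set.Iio t) t := by
        intro j
        ext x
        constructor
        · rintro ⟨hxX, hxt⟩
          have hxt' : x < t := hxt
          refine ⟨hxt', ?_⟩
          have hβ : ht x < ht t := hmono x t hxt'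
          have hcode : Ordinal.omega0 * ht x + (j : Ordinal) < ht t :=
            lt_of_lt_of_le (add_lt_add_right (Ordinal.nat_lt_omega0 j) _) (hg.2 (ht x) hβ)
          obtain ⟨s, hst, hhs⟩ := hex t _ hcode
          have hle : ht x ≤ ht s := by
            rw [hhs]
            exact le_trans (Ordinal.le_mul_right _ Ordinal.omega0_pos)
              le_self_add
          have hxs : x ≤ s := by
            rcases eq_or_ne x s with rfl | hne
            · exact le_rfl
            · rcases hchain t hxt' hst hne with h | h
              · exact h
              · rcases eq_or_lt_of_le h with rfl | h'
                · exact le_rfl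
                · exact absurd (hmono s x h') (not_lt.2 hle)
          exact ⟨s, hst, ⟨⟨x, j, hxs, hhs, hxX⟩, hst⟩, hxs, hhs⟩
        · rintro ⟨hxt, s, hst, ⟨hsY, -⟩, hxs, hhs⟩
          obtain ⟨x', j', hx's, hhs', hx'X⟩ := hsY
          obtain ⟨hβeq, hjeq⟩ := hdiv (ht x') (ht x) j' j (hhs'.symm.trans hhs)
          subst hjeq
          have hxx : x' = x := huniq s x' x hx's hxs hβeq
          rw [hxx] at hx'X
          exact ⟨hx'X, hxt⟩
      refine Or.inr (Set.mem_iUnion.2 ⟨Nat.pair 0 m, ?_⟩)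
      show X (Nat.pair 0 m) ∩ Set.Iio t =
        decodeSet ht (Nat.pair 0 m) (e t (Nat.unpair (Nat.pair 0 m)).2) t
      rw [show (Nat.unpair (Nat.pair 0 m)).2 = m by rw [Nat.unpair_pair], hm]
      exact hdec (Nat.pair 0 m)
    · exact Or.inl hg
  · -- ◊ → ◊⁻
    rintro ⟨D, hD1, hD2⟩
    refine ⟨fun t => {D t}, fun t => ⟨?_, Set.countable_singleton _⟩, ?_⟩
    · intro A hA
      rw [Set.mem_singleton_iff] at hA
      rw [hA]
      exact hD1 t
    · intro Xs h
      refine hD2 Xs ?_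
      have heq : {t : T | Xs ∩ Set.Iio t = D t} =
          {t : T | Xs ∩ Set.Iio t ∈ ({D t} : Set (Set T))} := by
        ext t
        simp [Set.mem_singleton_iff]
      rw [heq]
      exact h
end

section
/- Let S and T be trees of height ω₁ with S ≤ T, and suppose S is a nonspecial ω₁-tree. Then T is nonspecial and ◊_S implies ◊_T. -/
open Set

section Stmt7Aux

open Ordinal Cardinal

theorem omega1_eq_ord : (omega1 : Ordinal) = (Cardinal.aleph 1).ord := by
  rw [omega1, Cardinal.ord_aleph]

theorem card_le_of_lt_omega1 {o : Ordinal} (h : o < omega1) : o.card ≤ Cardinal.aleph0 := by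
  rw [omega1_eq_ord, Cardinal.lt_ord] at h
  rwa [← Cardinal.succ_aleph0, Order.lt_succ_iff] at h

theorem lt_omega1_of_card_le {o : Ordinal} (h : o.card ≤ Cardinal.aleph0) : o < omega1 := by
  rw [omega1_eq_ord, Cardinal.lt_ord]
  exact h.trans_lt Cardinal.aleph0_lt_aleph_one

theorem countable_Iio_ord {o : Ordinal} (h : o < omega1) : (Set.Iio o).Countable := by
  rw [Cardinal.countable_iff_lt_aleph_one, Ordinal.mk_Iio_ordinal]
  calc Cardinal.lift o.card ≤ Cardinal.lift Cardinal.aleph0 :=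
        Cardinal.lift_le.2 (card_le_of_lt_omega1 h)
    _ = Cardinal.aleph0 := Cardinal.lift_aleph0
    _ < Cardinal.aleph 1 := Cardinal.aleph0_lt_aleph_one

theorem omega1_isLimit : Order.IsSuccLimit omega1 := by
  rw [omega1_eq_ord]
  exact Cardinal.isSuccLimit_ord (Cardinal.aleph0_lt_aleph_one.le)

theorem succ_lt_omega1 {o : Ordinal} (h : o < omega1) : o + 1 < omega1 := by
  have := omega1_isLimit.succ_lt h
  simpa [Order.succ] using this

theorem iSup_lt_omega1 {ι : Type} [Countable ι] (f : ι → Ordinal)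
    (h : ∀ i, f i < omega1) : iSup f < omega1 := by
  rw [omega1_eq_ord]
  exact (Ordinal.iSup_lt_omega_one (fun i => h i)).trans_eq (by rw [← omega1_eq_ord]; rfl)

section Trees

variable {α : Type*} [PartialOrder α]

theorem special_mono {U V : Set α} (hUV : U ⊆ V) (h : IsSpecialSet V) : IsSpecialSet U := by
  obtain ⟨A, hA, hsub⟩ := h
  exact ⟨A, hA, hUV.trans hsub⟩

theorem special_iUnion {U : ℕ → Set α} (h : ∀ n, IsSpecialSet (U n)) :
    IsSpecialSet (⋃ n, U n) := by
  choose A hA hsub using h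
  classical
  let e : ℕ ≃ ℕ × ℕ := (Denumerable.eqv (ℕ × ℕ)).symm
  refine ⟨fun k => A (e k).1 (e k).2, fun k => hA _ _, ?_⟩
  intro x hx
  obtain ⟨n, hn⟩ := Set.mem_iUnion.1 hx
  obtain ⟨m, hm⟩ := Set.mem_iUnion.1 (hsub n hn)
  exact Set.mem_iUnion.2 ⟨e.symm (n, m), by simpa [e] using hm⟩

theorem special_empty : IsSpecialSet (∅ : Set α) :=
  ⟨fun _ => ∅, fun _ => Set.subsingleton_empty.isAntichain _, by simp⟩

theorem special_singleton (a : α) : IsSpecialSet ({a} : Set α) :=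
  ⟨fun _ => {a}, fun _ => Set.subsingleton_singleton.isAntichain _, by simp⟩

theorem special_biUnion {β : Type*} {P : Set β} (hP : P.Countable) {V : β → Set α}
    (h : ∀ i ∈ P, IsSpecialSet (V i)) : IsSpecialSet (⋃ i ∈ P, V i) := by
  rcases P.eq_empty_or_nonempty with rfl | hne
  · simpa using special_empty
  · obtain ⟨f, hf⟩ := hP.exists_eq_range hne
    have : (⋃ i ∈ P, V i) ⊆ ⋃ n, V (f n) := by
      intro x hx
      obtain ⟨i, hi, hxi⟩ := Set.mem_iUnion₂.1 hx
      have : i ∈ Set.range f := hf ▸ hi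
      obtain ⟨n, rfl⟩ := this
      exact Set.mem_iUnion.2 ⟨n, hxi⟩
    exact special_mono this (special_iUnion fun n => h (f n) (by rw [hf]; exact ⟨n, rfl⟩))

theorem special_countable {U : Set α} (h : U.Countable) : IsSpecialSet U := by
  have : U ⊆ ⋃ a ∈ U, ({a} : Set α) := by intro x hx; exact Set.mem_iUnion₂.2 ⟨x, hx, rfl⟩
  exact special_mono this (special_biUnion h fun a _ => special_singleton a)

theorem special_union {U V : Set α} (hU : IsSpecialSet U) (hV : IsSpecialSet V) :
    IsSpecialSet (U ∪ V) := by
  classical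
  have : (U ∪ V) ⊆ ⋃ n : ℕ, (if n = 0 then U else V) := by
    intro x hx
    rcases hx with hx | hx
    · exact Set.mem_iUnion.2 ⟨0, by simpa using hx⟩
    · exact Set.mem_iUnion.2 ⟨1, by simpa using hx⟩
  refine special_mono this (special_iUnion fun n => ?_)
  by_cases h : n = 0 <;> simp [h, hU, hV]

variable {ht : α → Ordinal}

theorem tree_lt_of_ht_lt (hchain : PredsChain α) (hht : IsHeightFun ht) {t a b : α}
    (ha : a < t) (hb : b < t) (hab : ht a < ht b) : a < b := by
  rcases eq_or_ne a b with rfl | hne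
  · exact absurd hab (lt_irrefl _)
  rcases hchain t ha hb hne with h | h
  · exact lt_of_le_of_ne h hne
  · rcases lt_or_eq_of_le h with h' | h'
    · exact absurd (hht.1 _ _ h') (by simp [le_of_lt hab, not_lt.2 hab.le])
    · exact absurd hab (by rw [h']; exact lt_irrefl _)

theorem tree_eq_of_ht_eq (hchain : PredsChain α) (hht : IsHeightFun ht) {t a b : α}
    (ha : a < t) (hb : b < t) (hab : ht a = ht b) : a = b := by
  by_contra hne
  rcases hchain t ha hb hne with h | h
  · exact absurd (hht.1 _ _ (lt_of_le_of_ne h hne)) (by simp [hab])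
  · exact absurd (hht.1 _ _ (lt_of_le_of_ne h (Ne.symm hne))) (by simp [hab])

theorem ht_ne_zero_of_ne_bot [OrderBot α] (hht : IsHeightFun ht) {s : α} (h : s ≠ ⊥) :
    ht s ≠ 0 := by
  intro h0
  exact absurd (h0 ▸ hht.1 ⊥ s (bot_lt_iff_ne_bot.2 h)) (not_lt_of_ge zero_le)

noncomputable def predAt (ht : α → Ordinal) (t : α) (o : Ordinal) : α := by
  classical exact if h : ∃ s, s < t ∧ ht s = o then h.choose else t

theorem predAt_spec (hht : IsHeightFun ht) {t : α} {o : Ordinal} (h : o < ht t) :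
    predAt ht t o < t ∧ ht (predAt ht t o) = o := by
  have hex : ∃ s, s < t ∧ ht s = o := hht.2 t o h
  rw [predAt, dif_pos hex]
  exact hex.choose_spec

theorem countable_Iio_tree (hchain : PredsChain α) (hht : IsHeightFun ht) {t : α}
    (h : ht t < omega1) : (Set.Iio t).Countable := by
  obtain ⟨f, hf⟩ := Set.countable_iff_exists_injOn.1 (countable_Iio_ord h)
  refine Set.countable_iff_exists_injOn.2 ⟨fun s => f (ht s), ?_⟩
  intro a ha b hb hab
  exact tree_eq_of_ht_eq hchain hht ha hb (hf (hht.1 _ _ ha) (hht.1 _ _ hb) hab)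

theorem isAntichain_level (hht : IsHeightFun ht) (o : Ordinal) :
    IsAntichain (· ≤ ·) {s : α | ht s = o} := by
  intro a ha b hb hne hab
  have h1 : ht a = o := ha
  have h2 : ht b = o := hb
  have := hht.1 _ _ (lt_of_le_of_ne hab hne)
  rw [h1, h2] at this
  exact absurd this (lt_irrefl o)

theorem special_of_levels (hht : IsHeightFun ht) {L : Set Ordinal} (hL : L.Countable)
    {U : Set α} (hU : ∀ s ∈ U, ht s ∈ L) : IsSpecialSet U := by
  have : U ⊆ ⋃ o ∈ L, {s : α | ht s = o} := fun s hs => Set.mem_iUnion₂.2 ⟨ht s, hU s hs, rfl⟩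
  exact special_mono this (special_biUnion hL fun o _ =>
    ⟨fun _ => {s : α | ht s = o}, fun _ => isAntichain_level hht o,
      fun s hs => Set.mem_iUnion.2 ⟨0, hs⟩⟩)

theorem inNS_mono_s7 [OrderBot α] {U V : Set α} (h : U ⊆ V) (hV : InNS V) : InNS U := by
  obtain ⟨f, hreg, hfib⟩ := hV
  refine ⟨f, fun t htU => hreg t (h htU), fun t => special_mono ?_ (hfib t)⟩
  intro s hs
  exact ⟨h hs.1, hs.2⟩

theorem inNS_of_special [OrderBot α] {U : Set α} (h : IsSpecialSet U) : InNS U := by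
  classical
  refine ⟨fun _ => ⊥, fun t _ h' => bot_lt_iff_ne_bot.2 h', fun t => ?_⟩
  by_cases hb : (⊥ : α) = t
  · exact special_mono (fun s hs => hs.1) h
  · have : {s : α | s ∈ U ∧ (⊥ : α) = t} = ∅ := by ext s; simp [hb]
    rw [this]; exact special_empty

theorem inNS_iUnion_s7 [OrderBot α] {U : ℕ → Set α} (h : ∀ n, InNS (U n)) :
    InNS (⋃ n, U n) := by
  classical
  choose f hreg hfib using h
  refine ⟨fun s => if h : ∃ n, s ∈ U n then f (Nat.find h) s else ⊥, ?_, ?_⟩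
  · intro t htmem htne
    have hex : ∃ n, t ∈ U n := Set.mem_iUnion.1 htmem
    show (if h : ∃ n, t ∈ U n then f (Nat.find h) t else ⊥) < t
    rw [dif_pos hex]
    exact hreg _ t (Nat.find_spec hex) htne
  · intro t
    refine special_mono ?_ (special_iUnion fun n => hfib n t)
    intro s hs
    obtain ⟨hsU, hst⟩ := hs
    have hex : ∃ n, s ∈ U n := Set.mem_iUnion.1 hsU
    have hst : (if h : ∃ n, s ∈ U n then f (Nat.find h) s else ⊥) = t := hst
    rw [dif_pos hex] at hst
    exact Set.mem_iUnion.2 ⟨Nat.find hex, Nat.find_spec hex, hst⟩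

theorem inNS_union_s7 [OrderBot α] {U V : Set α} (hU : InNS U) (hV : InNS V) :
    InNS (U ∪ V) := by
  classical
  have hsub : (U ∪ V) ⊆ ⋃ n : ℕ, (if n = 0 then U else V) := by
    intro x hx
    rcases hx with hx | hx
    · exact Set.mem_iUnion.2 ⟨0, by simpa using hx⟩
    · exact Set.mem_iUnion.2 ⟨1, by simpa using hx⟩
  refine inNS_mono_s7 hsub (inNS_iUnion_s7 fun n => ?_)
  by_cases h : n = 0 <;> simp [h, hU, hV]

theorem isAntichain_preimage {β : Type*} [PartialOrder β] {g : α → β} (hg : StrictMono g)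
    {A : Set β} (hA : IsAntichain (· ≤ ·) A) : IsAntichain (· ≤ ·) (g ⁻¹' A) := by
  intro a ha b hb hne hab
  have : g a < g b := hg (lt_of_le_of_ne hab hne)
  exact hA ha hb (ne_of_lt this) this.le

theorem special_preimage {β : Type*} [PartialOrder β] {g : α → β} (hg : StrictMono g)
    {B : Set β} (hB : IsSpecialSet B) : IsSpecialSet (g ⁻¹' B) := by
  obtain ⟨A, hA, hsub⟩ := hB
  refine ⟨fun n => g ⁻¹' (A n), fun n => isAntichain_preimage hg (hA n), ?_⟩
  intro s hs
  obtain ⟨n, hn⟩ := Set.mem_iUnion.1 (hsub hs)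
  exact Set.mem_iUnion.2 ⟨n, hn⟩

end Trees

end Stmt7Aux

section Stmt7Aux2

open Ordinal Cardinal

/-- Pullback of the NS ideal along a level-preserving strictly increasing map. -/
theorem inNS_pullback {σ : Type*} {τ : Type*} [PartialOrder σ] [OrderBot σ]
    [PartialOrder τ] [OrderBot τ]
    {hts : σ → Ordinal} (hhts : IsHeightFun hts)
    (hchainτ : PredsChain τ) {htt : τ → Ordinal} (hhtt : IsHeightFun htt)
    (hΩ : ∀ s : σ, hts s < omega1)
    {g : σ → τ} (hg : StrictMono g) (hlev : ∀ s, htt (g s) = hts s)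
    {B : Set τ} (hB : InNS B) : InNS (g ⁻¹' B) := by
  classical
  obtain ⟨f, hreg, hfib⟩ := hB
  -- basic facts
  have hu : ∀ s : σ, s ∈ g ⁻¹' B → s ≠ ⊥ → htt (f (g s)) < hts s := by
    intro s hsB hs
    have hgs : g s ≠ ⊥ := by
      intro h
      have h0 : htt (g s) = 0 := by
        by_contra hne
        obtain ⟨u, hu1, _⟩ := hhtt.2 (g s) 0 (pos_iff_ne_zero.2 hne)
        rw [h] at hu1
        exact absurd hu1 (not_lt_bot)
      rw [hlev] at h0
      exact ht_ne_zero_of_ne_bot hhts hs h0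
    have := hhtt.1 _ _ (hreg (g s) hsB hgs)
    rwa [hlev] at this
  refine ⟨fun s =>
      if h : s ∈ g ⁻¹' B ∧ s ≠ ⊥ then
        (if h2 : htt (f (g s)) + 1 < hts s then predAt hts s (htt (f (g s)) + 1)
          else predAt hts s (htt (f (g s)))) else ⊥, ?_, ?_⟩
  · intro s hsB hs
    show (if h : s ∈ g ⁻¹' B ∧ s ≠ ⊥ then _ else ⊥) < s
    rw [dif_pos ⟨hsB, hs⟩]
    by_cases h2 : htt (f (g s)) + 1 < hts s
    · rw [dif_pos h2]; exact (predAt_spec hhts h2).1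
    · rw [dif_neg h2]; exact (predAt_spec hhts (hu s hsB hs)).1
  · intro s₀
    -- the fiber over s₀
    set F : Set σ := {s : σ | s ∈ g ⁻¹' B ∧
      (if h : s ∈ g ⁻¹' B ∧ s ≠ ⊥ then
        (if h2 : htt (f (g s)) + 1 < hts s then predAt hts s (htt (f (g s)) + 1)
          else predAt hts s (htt (f (g s)))) else ⊥) = s₀} with hF
    have hsplit : F ⊆ {(⊥ : σ)} ∪ {s : σ | hts s = hts s₀ + 1} ∪
        (⋃ u ∈ Set.Iio (g s₀), {s : σ | s ∈ g ⁻¹' B ∧ f (g s) = u}) := by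
      intro s hs
      obtain ⟨hsB, hfs⟩ := hs
      by_cases hbot : s = ⊥
      · exact Or.inl (Or.inl hbot)
      rw [dif_pos ⟨hsB, hbot⟩] at hfs
      by_cases h2 : htt (f (g s)) + 1 < hts s
      · -- main case: f (g s) < g s₀
        rw [dif_pos h2] at hfs
        obtain ⟨hlt, hht'⟩ := predAt_spec hhts h2
        rw [hfs] at hlt hht'
        refine Or.inr (Set.mem_iUnion₂.2 ⟨f (g s), ?_, hsB, rfl⟩)
        -- f (g s) and g s₀ are both predecessors of g s
        have h1 : f (g s) < g s := by
          have := hu s hsB hbot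
          -- f (g s) < g s since it's regressive
          exact hreg (g s) hsB (by
            intro h
            have h0 : htt (g s) = 0 := by
              by_contra hne
              obtain ⟨u, hu1, _⟩ := hhtt.2 (g s) 0 (pos_iff_ne_zero.2 hne)
              rw [h] at hu1
              exact absurd hu1 (not_lt_bot)
            rw [hlev] at h0
            exact ht_ne_zero_of_ne_bot hhts hbot h0)
        have h3 : g s₀ < g s := hg hlt
        have h4 : htt (f (g s)) < htt (g s₀) := by
          rw [hlev, hht']
          exact lt_add_one _
        exact tree_lt_of_ht_lt hchainτ hhtt h1 h3 h4
      · -- successor case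
        rw [dif_neg h2] at hfs
        have h2' : htt (f (g s)) + 1 = hts s := by
          have := hu s hsB hbot
          rcases lt_or_eq_of_le (Order.add_one_le_iff.2 this) with h | h
          · exact absurd h h2
          · exact h
        obtain ⟨hlt, hht'⟩ := predAt_spec hhts (hu s hsB hbot)
        rw [hfs] at hlt hht'
        refine Or.inl (Or.inr ?_)
        show hts s = hts s₀ + 1
        rw [hht', h2']
    refine special_mono hsplit (special_union (special_union ?_ ?_) ?_)
    · exact special_singleton _
    · exact special_of_levels hhts (Set.countable_singleton (hts s₀ + 1))
        (fun s hs => hs)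
    · refine special_biUnion ?_ ?_
      · have : htt (g s₀) < omega1 := by rw [hlev]; exact hΩ s₀
        exact countable_Iio_tree hchainτ hhtt this
      · intro u _
        have : {s : σ | s ∈ g ⁻¹' B ∧ f (g s) = u} = g ⁻¹' {t : τ | t ∈ B ∧ f t = u} := rfl
        rw [this]
        exact special_preimage hg (hfib u)

/-- The pairing/coding function on ordinals. -/
noncomputable def ordCode (ξ : Ordinal) (n : ℕ) : Ordinal := Ordinal.omega0 * ξ + n

theorem ordCode_inj {ξ ξ' : Ordinal} {n n' : ℕ} (h : ordCode ξ n = ordCode ξ' n') :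
    ξ = ξ' ∧ n = n' := by
  have hdiv : ∀ (ζ : Ordinal) (m : ℕ), ordCode ζ m / Ordinal.omega0 = ζ := by
    intro ζ m
    rw [ordCode, Ordinal.mul_add_div _ Ordinal.omega0_ne_zero,
      Ordinal.div_eq_zero_of_lt (Ordinal.nat_lt_omega0 m), add_zero]
  have hmod : ∀ (ζ : Ordinal) (m : ℕ), ordCode ζ m % Ordinal.omega0 = m := by
    intro ζ m
    rw [ordCode, Ordinal.mul_add_mod_self, Ordinal.mod_eq_of_lt (Ordinal.nat_lt_omega0 m)]
  constructor
  · rw [← hdiv ξ n, ← hdiv ξ' n', h]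
  · have := (hmod ξ n).symm.trans (h ▸ hmod ξ' n')
    exact_mod_cast this

theorem ordCode_lt_omega1 {ξ : Ordinal} (h : ξ < omega1) (n : ℕ) :
    ordCode ξ n < omega1 := by
  apply lt_omega1_of_card_le
  rw [ordCode, Ordinal.card_add, Ordinal.card_mul, Ordinal.card_omega0, Ordinal.card_nat]
  calc Cardinal.aleph0 * ξ.card + (n : Cardinal)
      ≤ Cardinal.aleph0 * Cardinal.aleph0 + Cardinal.aleph0 := by
        gcongr
        · exact card_le_of_lt_omega1 h
        · exact (Cardinal.nat_lt_aleph0 n).le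
    _ = Cardinal.aleph0 := by
        rw [Cardinal.aleph0_mul_aleph0, Cardinal.aleph0_add_aleph0]

/-- The set of ordinals closed under the coding function. -/
def ordClub : Set Ordinal := {δ : Ordinal | ∀ ξ < δ, ∀ n : ℕ, ordCode ξ n < δ}

theorem zero_mem_ordClub : (0 : Ordinal) ∈ ordClub := by
  intro ξ hξ n
  exact absurd hξ (not_lt_of_ge zero_le)

theorem ordClub_unbounded : ∀ o : Ordinal, o < omega1 →
    ∃ δ ∈ ordClub, o < δ ∧ δ < omega1 := by
  classical
  -- enumeration of Iio β
  have hEnum : ∀ β : Ordinal, ∃ e : ℕ → Ordinal,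
      β < omega1 → ((∀ ξ, ξ < β → ∃ n, e n = ξ) ∧ (∀ n, e n < omega1)) := by
    intro β
    by_cases hβ : β < omega1
    · have hc : (insert 0 (Set.Iio β)).Countable := (countable_Iio_ord hβ).insert 0
      obtain ⟨e, he⟩ := hc.exists_eq_range ⟨0, Set.mem_insert _ _⟩
      refine ⟨e, fun _ => ⟨?_, ?_⟩⟩
      · intro ξ hξ
        have : ξ ∈ Set.range e := he ▸ Set.mem_insert_of_mem _ hξ
        obtain ⟨n, hn⟩ := this
        exact ⟨n, hn⟩
      · intro n
        have : e n ∈ insert 0 (Set.Iio β) := he ▸ ⟨n, rfl⟩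
        rcases this with h | h
        · rw [h]; exact omega1_isLimit.pos
        · exact h.trans hβ
    · exact ⟨fun _ => 0, fun h => absurd h hβ⟩
  choose E hE using hEnum
  set step : Ordinal → Ordinal := fun δ =>
    max (δ + 1) (iSup (fun p : ℕ × ℕ => ordCode (E δ p.1) p.2 + 1)) with hstepdef
  have hstep_lt : ∀ δ, δ < omega1 → step δ < omega1 := by
    intro δ hδ
    rw [hstepdef]
    apply max_lt (succ_lt_omega1 hδ)
    apply iSup_lt_omega1
    intro p
    exact succ_lt_omega1 (ordCode_lt_omega1 ((hE δ hδ).2 p.1) p.2)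
  have hstep_code : ∀ δ, δ < omega1 → ∀ ξ < δ, ∀ n : ℕ, ordCode ξ n < step δ := by
    intro δ hδ ξ hξ n
    obtain ⟨k, hk⟩ := (hE δ hδ).1 ξ hξ
    have : ordCode ξ n + 1 ≤ iSup (fun p : ℕ × ℕ => ordCode (E δ p.1) p.2 + 1) := by
      have := le_ciSup (Ordinal.bddAbove_range
        (fun p : ℕ × ℕ => ordCode (E δ p.1) p.2 + 1)) (k, n)
      rwa [hk] at this
    calc ordCode ξ n < ordCode ξ n + 1 := lt_add_one _
      _ ≤ _ := this.trans (le_max_right _ _)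
  have hstep_gt : ∀ δ, δ < step δ := fun δ => (lt_add_one δ).trans_le (le_max_left _ _)
  intro o ho
  set r : ℕ → Ordinal := fun n => step^[n] (o + 1) with hrdef
  have hr_succ : ∀ n, r (n + 1) = step (r n) := by
    intro n
    rw [hrdef]
    simp [Function.iterate_succ_apply']
  have hr_lt : ∀ n, r n < omega1 := by
    intro n
    induction n with
    | zero => exact succ_lt_omega1 ho
    | succ k ih => rw [hr_succ]; exact hstep_lt _ ih
  refine ⟨iSup r, ?_, ?_, iSup_lt_omega1 r hr_lt⟩
  · intro ξ hξ n
    obtain ⟨k, hk⟩ := Ordinal.lt_iSup_iff.1 hξ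
    have h1 : ordCode ξ n < step (r k) := hstep_code (r k) (hr_lt k) ξ hk n
    have h2 : step (r k) = r (k + 1) := (hr_succ k).symm
    exact (h2 ▸ h1).trans_le (le_ciSup (Ordinal.bddAbove_range r) (k + 1))
  · calc o < o + 1 := lt_add_one o
      _ ≤ iSup r := le_ciSup (Ordinal.bddAbove_range r) 0

end Stmt7Aux2

section Stmt7Aux3

open Ordinal Cardinal

theorem inNS_outside_ordClub {α : Type*} [PartialOrder α] [OrderBot α] {ht : α → Ordinal}
    (hht : IsHeightFun ht) (hΩ : ∀ s : α, ht s < omega1) :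
    InNS {s : α | ht s ∉ ordClub} := by
  classical
  have hsup : ∀ δ : Ordinal, δ ∉ ordClub → sSup (ordClub ∩ Set.Iio δ) < δ := by
    intro δ hδ
    have hδ0 : δ ≠ 0 := by rintro rfl; exact hδ zero_mem_ordClub
    rw [ordClub] at hδ
    simp only [Set.mem_setOf_eq] at hδ
    push_neg at hδ
    obtain ⟨ξ, hξδ, n, hn⟩ := hδ
    have hbound : ∀ c ∈ ordClub ∩ Set.Iio δ, c ≤ ξ := by
      intro c hc
      by_contra hcξ
      push_neg at hcξ
      exact absurd ((hc.1 ξ hcξ n).trans hc.2) (not_lt.2 hn)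
    exact lt_of_le_of_lt (csSup_le ⟨0, zero_mem_ordClub, pos_iff_ne_zero.2 hδ0⟩ hbound)
      hξδ
  refine ⟨fun s => if h : ht s ∉ ordClub then
      predAt ht s (sSup (ordClub ∩ Set.Iio (ht s))) else ⊥, ?_, ?_⟩
  · intro s hs _
    have hs' : ht s ∉ ordClub := hs
    show (if h : ht s ∉ ordClub then predAt ht s (sSup (ordClub ∩ Set.Iio (ht s))) else ⊥) < s
    rw [dif_pos hs']
    exact (predAt_spec hht (hsup _ hs')).1
  · intro s₀
    obtain ⟨γ₀, hγclub, hγgt, hγlt⟩ := ordClub_unbounded (ht s₀) (hΩ s₀)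
    have hW : IsSpecialSet {s : α | ht s < γ₀} :=
      special_of_levels hht (countable_Iio_ord hγlt) (fun s hs => hs)
    refine special_mono ?_ hW
    intro s hs
    obtain ⟨hsN, hfs⟩ := hs
    have hsN : ht s ∉ ordClub := hsN
    have hfs : (if h : ht s ∉ ordClub then predAt ht s (sSup (ordClub ∩ Set.Iio (ht s)))
        else ⊥) = s₀ := hfs
    rw [dif_pos hsN] at hfs
    obtain ⟨hlt, hht'⟩ := predAt_spec hht (hsup _ hsN)
    rw [hfs] at hlt hht'
    -- hht' : ht s₀ = sSup (ordClub ∩ Iio (ht s))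
    show ht s < γ₀
    by_contra hcon
    push_neg at hcon
    rcases lt_or_eq_of_le hcon with h | h
    · have : γ₀ ∈ ordClub ∩ Set.Iio (ht s) := ⟨hγclub, h⟩
      have hle := le_csSup ⟨ht s, fun c hc => (hc.2 : c < ht s).le⟩ this
      rw [← hht'] at hle
      exact absurd (hγgt.trans_le hle) (lt_irrefl _)
    · exact hsN (h ▸ hγclub)

theorem exists_levelPreserving {σ : Type*} {τ : Type*} [PartialOrder σ] [PartialOrder τ]
    (hchainτ : PredsChain τ) {hts : σ → Ordinal} (hhts : IsHeightFun hts)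
    {htt : τ → Ordinal} (hhtt : IsHeightFun htt)
    {g : σ → τ} (hg : StrictMono g) :
    ∃ g' : σ → τ, StrictMono g' ∧ ∀ s, htt (g' s) = hts s := by
  classical
  have hle : ∀ s : σ, hts s ≤ htt (g s) := by
    suffices H : ∀ o : Ordinal, ∀ s : σ, hts s = o → o ≤ htt (g s) by
      intro s; exact H _ s rfl
    intro o
    induction o using Ordinal.induction with
    | h o IH =>
      intro s hs
      by_contra hcon
      push_neg at hcon
      obtain ⟨s', hs', ho'⟩ := hhts.2 s (htt (g s)) (hs ▸ hcon)
      have h1 := IH (htt (g s)) hcon s' ho'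
      have h2 := hhtt.1 _ _ (hg hs')
      exact absurd (h1.trans_lt h2) (lt_irrefl _)
  refine ⟨fun s => if h : hts s < htt (g s) then predAt htt (g s) (hts s) else g s, ?_, ?_⟩
  · intro s₁ s₂ h12
    set v₁ := if h : hts s₁ < htt (g s₁) then predAt htt (g s₁) (hts s₁) else g s₁ with hv₁
    set v₂ := if h : hts s₂ < htt (g s₂) then predAt htt (g s₂) (hts s₂) else g s₂ with hv₂
    show v₁ < v₂
    have hv₁le : v₁ ≤ g s₁ := by
      rw [hv₁]; split
      · exact (predAt_spec hhtt (by assumption)).1.le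
      · exact le_rfl
    have hv₁ht : htt v₁ = hts s₁ := by
      rw [hv₁]; split
      · exact (predAt_spec hhtt (by assumption)).2
      · exact le_antisymm (not_lt.1 (by assumption)) (hle s₁)
    have h1 : v₁ < g s₂ := lt_of_le_of_lt hv₁le (hg h12)
    by_cases h : hts s₂ < htt (g s₂)
    · have hsp := predAt_spec hhtt h
      rw [hv₂, dif_pos h]
      refine tree_lt_of_ht_lt hchainτ hhtt h1 hsp.1 ?_
      rw [hv₁ht, hsp.2]
      exact hhts.1 _ _ h12
    · rw [hv₂, dif_neg h]
      exact h1
  · intro s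
    show htt (if h : hts s < htt (g s) then predAt htt (g s) (hts s) else g s) = hts s
    split
    · exact (predAt_spec hhtt (by assumption)).2
    · exact le_antisymm (not_lt.1 (by assumption)) (hle s)

end Stmt7Aux3

section Stmt7Aux4

theorem lift_omega1.{u, v} : Ordinal.lift.{v} (omega1 : Ordinal.{u}) = omega1 := by
  rw [omega1, Ordinal.lift_omega, Ordinal.lift_one, omega1]

theorem isHeightFun_lift.{u, v} {α : Type*} [PartialOrder α] {ht : α → Ordinal.{u}}
    (h : IsHeightFun ht) : IsHeightFun (fun t => Ordinal.lift.{v} (ht t)) := by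
  constructor
  · intro s t hst
    exact Ordinal.lift_lt.2 (h.1 s t hst)
  · intro t o ho
    obtain ⟨o', ho', rfl⟩ := Ordinal.lt_lift_iff.1 ho
    obtain ⟨s, hs, hhs⟩ := h.2 t o' ho'
    exact ⟨s, hs, by show Ordinal.lift.{v} (ht s) = _; rw [hhs]⟩

theorem heightOmega1_lift.{u, v} {α : Type*} [PartialOrder α] {ht : α → Ordinal.{u}}
    (h : HeightOmega1 ht) : HeightOmega1 (fun t => Ordinal.lift.{v} (ht t)) := by
  constructor
  · intro t
    rw [← lift_omega1.{u, v}]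
    exact Ordinal.lift_lt.2 (h.1 t)
  · intro o ho
    rw [← lift_omega1.{u, v}] at ho
    obtain ⟨o', ho', rfl⟩ := Ordinal.lt_lift_iff.1 ho
    obtain ⟨t, hst⟩ := h.2 o' ho'
    exact ⟨t, by show Ordinal.lift.{v} (ht t) = _; rw [hst]⟩

theorem countableLevels_lift.{u, v} {α : Type*} [PartialOrder α] {ht : α → Ordinal.{u}}
    (h : CountableLevels ht) : CountableLevels (fun t => Ordinal.lift.{v} (ht t)) := by
  intro o
  by_cases h' : ∃ o' : Ordinal.{u}, Ordinal.lift.{v} o' = o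
  · obtain ⟨o', rfl⟩ := h'
    have : {t : α | Ordinal.lift.{v} (ht t) = Ordinal.lift.{v} o'} = {t : α | ht t = o'} := by
      ext t
      exact Ordinal.lift_inj
    exact this ▸ h o'
  · have : {t : α | Ordinal.lift.{v} (ht t) = o} = ∅ := by
      ext t
      simp only [Set.mem_setOf_eq, Set.mem_empty_iff_false, iff_false]
      intro hc
      exact h' ⟨ht t, hc⟩
    rw [this]
    exact Set.countable_empty

end Stmt7Aux4


theorem stmt7_aux.{u1, u2, u3, u4} {S : Type u1} {T : Type u2}
    [PartialOrder S] [OrderBot S] [PartialOrder T] [OrderBot T]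
    (hchainS : PredsChain S) (htS : S → Ordinal.{u3})
    (hhtS : IsHeightFun htS) (hΩS : HeightOmega1 htS) (hlevS : CountableLevels htS)
    (hnsS : ¬ IsSpecialSet (Set.univ : Set S))
    (hchainT : PredsChain T) (htT : T → Ordinal.{u4})
    (hhtT : IsHeightFun htT) (hΩT : HeightOmega1 htT)
    (hle : ∃ g : S → T, StrictMono g) :
    ¬ IsSpecialSet (Set.univ : Set T) ∧ (DiamondTree S → DiamondTree T) := by
  classical
  set htS' : S → Ordinal.{max u3 u4} := fun s => Ordinal.lift.{u4} (htS s) with htS'def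
  set htT' : T → Ordinal.{max u3 u4} := fun t => Ordinal.lift.{u3} (htT t) with htT'def
  have hhtS' : IsHeightFun htS' := isHeightFun_lift.{u3, u4} hhtS
  have hΩS' : HeightOmega1 htS' := heightOmega1_lift.{u3, u4} hΩS
  have hlevS' : CountableLevels htS' := countableLevels_lift.{u3, u4} hlevS
  have hhtT' : IsHeightFun htT' := isHeightFun_lift.{u4, u3} hhtT
  have hΩT' : HeightOmega1 htT' := heightOmega1_lift.{u4, u3} hΩT
  obtain ⟨g0, hg0⟩ := hle
  constructor
  · -- T is nonspecial
    intro hTspec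
    have := special_preimage hg0 hTspec
    rw [Set.preimage_univ] at this
    exact hnsS this
  · intro hDS
    obtain ⟨D, _hDsub, hDdiam⟩ := hDS
    obtain ⟨g, hgmono, hglev⟩ := exists_levelPreserving hchainT hhtS' hhtT' hg0
    have hΩS1 : ∀ s : S, htS' s < omega1 := hΩS'.1
    -- Step 1: the diamond sequence on S guesses subsets of ω₁ along levels.
    have hnode : ∀ Z : Set Ordinal,
        ¬ InNS {s : S | Z ∩ Set.Iio (htS' s) = htS' '' (D s)} := by
      intro Z hIn
      apply hDdiam {u : S | htS' u ∈ Z}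
      refine inNS_mono_s7 ?_ hIn
      intro s hs
      have hs : {u : S | htS' u ∈ Z} ∩ Set.Iio s = D s := hs
      show Z ∩ Set.Iio (htS' s) = htS' '' (D s)
      ext o
      constructor
      · rintro ⟨hoZ, holt⟩
        obtain ⟨s', hs', ho⟩ := hhtS'.2 s o holt
        have hmem : s' ∈ {u : S | htS' u ∈ Z} ∩ Set.Iio s := ⟨by rw [Set.mem_setOf_eq, ho]; exact hoZ, hs'⟩
        rw [hs] at hmem
        exact ⟨s', hmem, ho⟩
      · rintro ⟨s', hs'D, rfl⟩
        have hmem : s' ∈ {u : S | htS' u ∈ Z} ∩ Set.Iio s := by rw [hs]; exact hs'D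
        exact ⟨hmem.1, hhtS'.1 _ _ hmem.2⟩
    -- Step 2: enumerations of the levels of S.
    have hsE : ∀ δ : Ordinal, ∃ e : ℕ → S,
        δ < omega1 → ∀ s : S, htS' s = δ → ∃ n, e n = s := by
      intro δ
      by_cases hδ : δ < omega1
      · obtain ⟨t0, ht0⟩ := hΩS'.2 δ hδ
        obtain ⟨e, he⟩ := (hlevS' δ).exists_eq_range ⟨t0, ht0⟩
        refine ⟨e, fun _ s hs => ?_⟩
        have : s ∈ Set.range e := he ▸ hs
        exact this
      · exact ⟨fun _ => ⊥, fun h => absurd h hδ⟩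
    choose sE hsE using hsE
    -- the candidate level sequences
    set Em : ℕ → Ordinal → Set Ordinal := fun m δ =>
      {ξ : Ordinal | ξ < δ ∧ ordCode ξ m ∈ htS' '' (D (sE δ m))} with hEm
    -- Step 3 (Kunen): one of the candidates guesses every subset of ω₁.
    have hKunen : ∃ m : ℕ, ∀ Z : Set Ordinal,
        ¬ InNS {s : S | Z ∩ Set.Iio (htS' s) = Em m (htS' s)} := by
      by_contra hK
      push_neg at hK
      choose Zs hZs using hK
      set Zstar : Set Ordinal := {o : Ordinal | ∃ m : ℕ, ∃ ξ ∈ Zs m, o = ordCode ξ m}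
        with hZstar
      have h2 : ¬ InNS {s : S | (Zstar ∩ Set.Iio (htS' s) = htS' '' (D s)) ∧
          htS' s ∈ ordClub} := by
        intro h
        apply hnode Zstar
        have hsub : {s : S | Zstar ∩ Set.Iio (htS' s) = htS' '' (D s)} ⊆
            {s : S | (Zstar ∩ Set.Iio (htS' s) = htS' '' (D s)) ∧ htS' s ∈ ordClub} ∪
            {s : S | htS' s ∉ ordClub} := by
          intro s hs
          by_cases hc : htS' s ∈ ordClub
          · exact Or.inl ⟨hs, hc⟩
          · exact Or.inr hc
        exact inNS_mono_s7 hsub (inNS_union_s7 h (inNS_outside_ordClub hhtS' hΩS1))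
      apply h2
      have hcover : {s : S | (Zstar ∩ Set.Iio (htS' s) = htS' '' (D s)) ∧ htS' s ∈ ordClub} ⊆
          ⋃ m : ℕ, {s : S | ((Zstar ∩ Set.Iio (htS' s) = htS' '' (D s)) ∧ htS' s ∈ ordClub) ∧
            sE (htS' s) m = s} := by
        intro s hs
        obtain ⟨n, hn⟩ := hsE (htS' s) (hΩS1 s) s rfl
        exact Set.mem_iUnion.2 ⟨n, hs, hn⟩
      refine inNS_mono_s7 hcover (inNS_iUnion_s7 fun m => ?_)
      refine inNS_mono_s7 ?_ (hZs m)
      rintro s ⟨⟨hguess, hclub⟩, hsel⟩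
      show Zs m ∩ Set.Iio (htS' s) = Em m (htS' s)
      ext ξ
      simp only [hEm, Set.mem_setOf_eq, Set.mem_inter_iff, Set.mem_Iio]
      constructor
      · rintro ⟨hξZ, hξδ⟩
        refine ⟨hξδ, ?_⟩
        rw [hsel, ← hguess]
        exact ⟨⟨m, ξ, hξZ, rfl⟩, hclub ξ hξδ m⟩
      · rintro ⟨hξδ, hmem⟩
        rw [hsel, ← hguess] at hmem
        obtain ⟨hmem1, _⟩ := hmem
        obtain ⟨m', ξ', hξ', hcode⟩ := hmem1
        obtain ⟨hξeq, hmeq⟩ := ordCode_inj hcode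
        refine ⟨?_, hξδ⟩
        rw [hξeq, hmeq]
        exact hξ'
    obtain ⟨m₀, hm₀⟩ := hKunen
    -- Step 4: coding of the image tree inside ω₁.
    have hdown : ∀ s : S, ∀ v : T, v < g s → v ∈ Set.range g := by
      intro s v hv
      have hvlt : htT' v < htS' s := by
        rw [← hglev s]; exact hhtT'.1 _ _ hv
      obtain ⟨hlt, hht'⟩ := predAt_spec hhtS' hvlt
      have h1 : g (predAt htS' s (htT' v)) < g s := hgmono hlt
      have h2 : v = g (predAt htS' s (htT' v)) := by
        refine tree_eq_of_ht_eq hchainT hhtT' hv h1 ?_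
        rw [hglev, hht']
      exact ⟨_, h2.symm⟩
    have hIdx : ∀ δ : Ordinal, ∃ ι : T → ℕ, δ < omega1 →
        Set.InjOn ι (Set.range g ∩ {t : T | htT' t = δ}) := by
      intro δ
      by_cases hδ : δ < omega1
      · have hcnt : (Set.range g ∩ {t : T | htT' t = δ}).Countable := by
          have hsub : Set.range g ∩ {t : T | htT' t = δ} ⊆ g '' {s : S | htS' s = δ} := by
            rintro t ⟨⟨s, rfl⟩, hts⟩
            refine ⟨s, ?_, rfl⟩
            show htS' s = δ
            rw [← hglev s]
            exact hts
          exact (((hlevS' δ).image g).mono hsub)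
        obtain ⟨ι, hι⟩ := Set.countable_iff_exists_injOn.1 hcnt
        exact ⟨ι, fun _ => hι⟩
      · exact ⟨fun _ => 0, fun h => absurd h hδ⟩
    choose nI hnI using hIdx
    set c : T → Ordinal := fun v => ordCode (htT' v) (nI (htT' v) v) with hc
    have hcinj : ∀ u v : T, u ∈ Set.range g → v ∈ Set.range g → c u = c v → u = v := by
      intro u v hu hv h
      obtain ⟨h1, h2⟩ := ordCode_inj h
      have hδ : htT' u < omega1 := by
        obtain ⟨s, rfl⟩ := hu
        rw [hglev]; exact hΩS1 s
      have hvmem : v ∈ Set.range g ∩ {t : T | htT' t = htT' u} := ⟨hv, h1.symm⟩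
      have humem : u ∈ Set.range g ∩ {t : T | htT' t = htT' u} := ⟨hu, rfl⟩
      refine hnI (htT' u) hδ humem hvmem ?_
      rw [h2, h1]
    -- Step 5: the diamond sequence on T.
    refine ⟨fun t => {v : T | v < t ∧ v ∈ Set.range g ∧ c v ∈ Em m₀ (htT' t)},
      fun t v hv => hv.1, ?_⟩
    intro X hInNS
    set Z : Set Ordinal := c '' (X ∩ Set.range g) with hZdef
    -- the positive guessing set on S
    have hNK : ¬ InNS {s : S | (Z ∩ Set.Iio (htS' s) = Em m₀ (htS' s)) ∧
        htS' s ∈ ordClub} := by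
      intro h
      apply hm₀ Z
      have hsub : {s : S | Z ∩ Set.Iio (htS' s) = Em m₀ (htS' s)} ⊆
          {s : S | (Z ∩ Set.Iio (htS' s) = Em m₀ (htS' s)) ∧ htS' s ∈ ordClub} ∪
          {s : S | htS' s ∉ ordClub} := by
        intro s hs
        by_cases hcl : htS' s ∈ ordClub
        · exact Or.inl ⟨hs, hcl⟩
        · exact Or.inr hcl
      exact inNS_mono_s7 hsub (inNS_union_s7 h (inNS_outside_ordClub hhtS' hΩS1))
    apply hNK
    have hsub2 : {s : S | (Z ∩ Set.Iio (htS' s) = Em m₀ (htS' s)) ∧ htS' s ∈ ordClub} ⊆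
        g ⁻¹' {t : T | X ∩ Set.Iio t =
          {v : T | v < t ∧ v ∈ Set.range g ∧ c v ∈ Em m₀ (htT' t)}} := by
      rintro s ⟨hguess, hclub⟩
      show X ∩ Set.Iio (g s) =
        {v : T | v < g s ∧ v ∈ Set.range g ∧ c v ∈ Em m₀ (htT' (g s))}
      have hδ : htT' (g s) = htS' s := hglev s
      ext v
      constructor
      · rintro ⟨hvX, hvlt⟩
        have hvbar : v ∈ Set.range g := hdown s v hvlt
        refine ⟨hvlt, hvbar, ?_⟩
        rw [hδ, ← hguess]
        have hvht : htT' v < htS' s := by rw [← hδ]; exact hhtT'.1 _ _ hvlt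
        exact ⟨⟨v, ⟨hvX, hvbar⟩, rfl⟩, hclub (htT' v) hvht (nI (htT' v) v)⟩
      · rintro ⟨hvlt, hvbar, hvc⟩
        rw [hδ, ← hguess] at hvc
        obtain ⟨hvc1, _⟩ := hvc
        obtain ⟨w, hw, hcw⟩ := hvc1
        have : w = v := hcinj w v hw.2 hvbar hcw
        exact ⟨this ▸ hw.1, hvlt⟩
    exact inNS_mono_s7 hsub2 (inNS_pullback hhtS' hchainT hhtT' hΩS1 hgmono hglev hInNS)

/-- If `S` and `T` are trees of height `ω₁` with `S ≤ T`
(there is a strictly increasing map from `S` to `T`) and `S` is a nonspecial `ω₁`-tree,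
then `T` is nonspecial and `◊_S` implies `◊_T`. -/
theorem stmt7 {S T : Type*} [PartialOrder S] [OrderBot S] [PartialOrder T] [OrderBot T]
    (hchainS : PredsChain S) (htS : S → Ordinal)
    (hhtS : IsHeightFun htS) (hΩS : HeightOmega1 htS) (hlevS : CountableLevels htS)
    (hnsS : ¬ IsSpecialSet (Set.univ : Set S))
    (hchainT : PredsChain T) (htT : T → Ordinal)
    (hhtT : IsHeightFun htT) (hΩT : HeightOmega1 htT)
    (hle : ∃ g : S → T, StrictMono g) :
    ¬ IsSpecialSet (Set.univ : Set T) ∧ (DiamondTree S → DiamondTree T) :=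
  stmt7_aux hchainS htS hhtS hΩS hlevS hnsS hchainT htT hhtT hΩT hle
end
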